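/- Let σ be an involution of {1,…,r} with permutation matrix C over a field 𝔽. Let I_1,…,I_T be pairwise disjoint subsets of {1,…,K}, each of size r, enumerated by bijections b_i : {1,…,r} → I_i. Let F_X be an L×K fitting pattern, G an r×K matrix, and D an L×r matrix with DG fitting F_X; suppose that for each i the r×r matrix A_i whose k-th column is the b_i(k)-th column of G commutes with C. Define the L×K X-pattern B whose entry at (l, j) is 0 if j = b_i(k) for some i and k with F_X(l, b_i(σ(k))) = 0, and X otherwise. Then the 2L×r matrix D' obtained by stacking D on top of DC satisfies: D'·(G | CG) fits the 2L×2K block pattern (F_X B; B F_X), so (G | CG) is a scalar linear index code of length r for the extension problem; moreover, if r = minrk(F_X), then minrk((F_X B; B F_X)) = minrk(F_X), i.e., the extension is rank-invariant. -/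

import Mathlib

open Matrix

/-- A pattern entry: `some false` = 0, `some true` = 1, `none` = X. -/
abbrev PatEntry := Option Bool

/-- A matrix `M` fits a pattern `P` if `M` is `0` at every `0`-entry of `P`
and `1` at every `1`-entry of `P` (X-entries are unconstrained). -/
def Fits {L K 𝔽 : Type*} [Zero 𝔽] [One 𝔽]
    (P : Matrix L K PatEntry) (M : Matrix L K 𝔽) : Prop :=
  ∀ i j, (P i j = some false → M i j = 0) ∧ (P i j = some true → M i j = 1)

/-- The minrank of a pattern over the field `𝔽`. -/
noncomputable def minrk (𝔽 : Type*) [Field 𝔽] {L K : Type*} [Fintype K]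
    (P : Matrix L K PatEntry) : ℕ :=
  sInf {n | ∃ M : Matrix L K 𝔽, Fits P M ∧ M.rank = n}

/-- Rank of the top-left block is at most the rank of the whole matrix. -/
lemma rank_toBlocks₁₁_le {L K : ℕ} {𝔽 : Type*} [Field 𝔽]
    (M : Matrix (Fin L ⊕ Fin L) (Fin K ⊕ Fin K) 𝔽) :
    M.toBlocks₁₁.rank ≤ M.rank := by
  have heq : M.toBlocks₁₁ =
      (Matrix.fromCols (1 : Matrix (Fin L) (Fin L) 𝔽) (0 : Matrix (Fin L) (Fin L) 𝔽) :
        Matrix (Fin L) (Fin L ⊕ Fin L) 𝔽) * M *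
        (Matrix.fromRows (1 : Matrix (Fin K) (Fin K) 𝔽) (0 : Matrix (Fin K) (Fin K) 𝔽) :
        Matrix (Fin K ⊕ Fin K) (Fin K) 𝔽) := by
    ext l j
    simp [toBlocks₁₁, mul_apply, Fintype.sum_sum_type, Matrix.fromCols, Matrix.fromRows_apply_inl, Matrix.fromRows_apply_inr,
      Matrix.one_apply]
  calc M.toBlocks₁₁.rank = _ := by rw [heq]
    _ ≤ ((Matrix.fromCols (1 : Matrix (Fin L) (Fin L) 𝔽) (0 : Matrix (Fin L) (Fin L) 𝔽) :
        Matrix (Fin L) (Fin L ⊕ Fin L) 𝔽) * M).rank :=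
        Matrix.rank_mul_le_left _ _
    _ ≤ M.rank := Matrix.rank_mul_le_right _ _

open Classical in
/-- Suppose `D * G` fits `FX` and, for each of the disjoint column blocks
`I_i = range (b i)`, the `r × r` submatrix `A_i` of `G` commutes with the
permutation matrix `C` of the involution `σ`.  Let `B` be the X-pattern obtained
from `FX` by permuting the columns within each block according to `σ`, filling the
remaining columns with `X`, and X-ing out the `1`s.  Then `(D; DC) * (G | CG)` fits
the block pattern `(FX B; B FX)`, so `(G | CG)` is a scalar linear index code of
length `r` for the extension; moreover if `r = minrk FX` the extension is
rank-invariant. -/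
theorem two_order_extension_of_commuting_blocks {L K r T : ℕ} {𝔽 : Type*} [Field 𝔽]
    (σ : Equiv.Perm (Fin r)) (hσ : ∀ i, σ (σ i) = i)
    (C : Matrix (Fin r) (Fin r) 𝔽)
    (hC : ∀ i j, C i j = if i = σ j then 1 else 0)
    (b : Fin T → Fin r → Fin K)
    (hb : Function.Injective fun p : Fin T × Fin r => b p.1 p.2)
    (FX : Matrix (Fin L) (Fin K) PatEntry)
    (G : Matrix (Fin r) (Fin K) 𝔽) (D : Matrix (Fin L) (Fin r) 𝔽)
    (hDG : Fits FX (D * G))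
    (hcomm : ∀ i : Fin T,
      (Matrix.of fun s k => G s (b i k)) * C = C * Matrix.of fun s k => G s (b i k))
    (B : Matrix (Fin L) (Fin K) PatEntry)
    (hBdef : ∀ l j, B l j =
      if ∃ i k, j = b i k ∧ FX l (b i (σ k)) = some false then some false else none) :
    Fits (Matrix.fromBlocks FX B B FX)
      (Matrix.fromRows D (D * C) * Matrix.fromCols G (C * G)) ∧
    (∃ D' : Matrix (Fin L ⊕ Fin L) (Fin r) 𝔽,
        Fits (Matrix.fromBlocks FX B B FX) (D' * Matrix.fromCols G (C * G))) ∧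
    (r = minrk 𝔽 FX →
        minrk 𝔽 (Matrix.fromBlocks FX B B FX) = minrk 𝔽 FX) := by
  -- C is an involution
  have hCC : C * C = 1 := by
    ext i j
    have key : ∀ t, C i t * C t j = if t = σ j then C i t else 0 := by
      intro t; rw [hC t j]; split <;> simp
    rw [mul_apply]
    simp only [key, Finset.sum_ite_eq', Finset.mem_univ, if_true]
    rw [hC, hσ, one_apply]
  -- the key column identity for C * G
  have hA : ∀ (i : Fin T) (s : Fin r) (k : Fin r),
      (C * G) s (b i k) = G s (b i (σ k)) := by
    intro i s k
    have h := congrFun (congrFun (hcomm i) s) k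
    have h1 : ((Matrix.of fun s k => G s (b i k)) * C) s k = G s (b i (σ k)) := by
      rw [mul_apply]
      have key : ∀ t, (Matrix.of fun s k => G s (b i k)) s t * C t k
          = if t = σ k then G s (b i t) else 0 := by
        intro t; rw [hC t k]; split <;> simp
      simp only [key, Finset.sum_ite_eq', Finset.mem_univ, if_true]
    have h2 : (C * (Matrix.of fun s k => G s (b i k))) s k = (C * G) s (b i k) := by
      rw [mul_apply, mul_apply]
      exact Finset.sum_congr rfl fun t _ => rfl
    rw [← h2, ← h, h1]
  -- the off-diagonal matrix vanishes on the zeros of B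
  have hN0 : ∀ l j, B l j = some false → (D * (C * G)) l j = 0 := by
    intro l j h
    rw [hBdef l j] at h
    by_cases hc : ∃ i k, j = b i k ∧ FX l (b i (σ k)) = some false
    · obtain ⟨i, k, rfl, hf⟩ := hc
      rw [mul_apply]
      calc ∑ s, D l s * (C * G) s (b i k)
          = ∑ s, D l s * G s (b i (σ k)) :=
            Finset.sum_congr rfl fun s _ => by rw [hA]
        _ = (D * G) l (b i (σ k)) := (mul_apply ..).symm
        _ = 0 := (hDG l (b i (σ k))).1 hf
    · simp [hc] at h
  have hN1 : ∀ l j, B l j ≠ some true := by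
    intro l j h
    rw [hBdef l j] at h
    split at h <;> simp_all
  -- the big matrix in block form
  have hmat : fromRows D (D * C) * fromCols G (C * G)
      = fromBlocks (D * G) (D * (C * G)) (D * (C * G)) (D * G) := by
    have e1 : D * C * G = D * (C * G) := Matrix.mul_assoc _ _ _
    have e2 : D * C * (C * G) = D * G := by
      rw [Matrix.mul_assoc, ← Matrix.mul_assoc C, hCC, Matrix.one_mul]
    rw [fromRows_mul_fromCols, e1, e2]
  have hbig : Fits (Matrix.fromBlocks FX B B FX)
      (Matrix.fromRows D (D * C) * Matrix.fromCols G (C * G)) := by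
    rw [hmat]
    rintro (l | l) (j | j)
    · simpa using hDG l j
    · exact ⟨fun h => hN0 l j (by simpa using h),
        fun h => absurd (by simpa using h) (hN1 l j)⟩
    · exact ⟨fun h => hN0 l j (by simpa using h),
        fun h => absurd (by simpa using h) (hN1 l j)⟩
    · simpa using hDG l j
  refine ⟨hbig, ⟨fromRows D (D * C), by rwa [fromRows_mul_fromCols] at hbig ⊢⟩, ?_⟩
  intro hr
  set bigM := Matrix.fromRows D (D * C) * Matrix.fromCols G (C * G) with hbigM
  have hrank : bigM.rank ≤ r := by
    calc bigM.rank ≤ (Matrix.fromCols G (C * G)).rank :=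
          Matrix.rank_mul_le_right _ _
      _ ≤ Fintype.card (Fin r) := Matrix.rank_le_card_height _
      _ = r := Fintype.card_fin r
  have hle : minrk 𝔽 (Matrix.fromBlocks FX B B FX) ≤ minrk 𝔽 FX := by
    rw [← hr]
    exact le_trans (Nat.sInf_le ⟨bigM, hbig, rfl⟩) hrank
  have hge : minrk 𝔽 FX ≤ minrk 𝔽 (Matrix.fromBlocks FX B B FX) := by
    have hne : {n | ∃ M : Matrix (Fin L ⊕ Fin L) (Fin K ⊕ Fin K) 𝔽,
        Fits (Matrix.fromBlocks FX B B FX) M ∧ M.rank = n}.Nonempty :=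
      ⟨bigM.rank, bigM, hbig, rfl⟩
    refine le_csInf hne ?_
    rintro n ⟨M, hM, rfl⟩
    have hfit : Fits FX M.toBlocks₁₁ := by
      intro l j
      have := hM (Sum.inl l) (Sum.inl j)
      simpa [toBlocks₁₁] using this
    exact le_trans (Nat.sInf_le ⟨M.toBlocks₁₁, hfit, rfl⟩) (rank_toBlocks₁₁_le M)
  exact le_antisymm hle hge
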